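/- Let ψ : T → (0,∞) be C² and solve ψ'' + ξψ = ζψ on the torus, with ξ continuous. Let Ξ be a primitive of ξ. Then max_x log ψ(x) - min_x log ψ(x) ≤ ‖(log ψ)'‖_∞ ≤ C(|ζ| + ‖Ξ‖_∞ + 1) for a constant C depending only on the torus. -/

import Mathlib

open Real

private lemma le_biSup_Icc (f : ℝ → ℝ) {M : ℝ} (hM : ∀ y ∈ Set.Icc (0:ℝ) 1, f y ≤ M)
    {x : ℝ} (hx : x ∈ Set.Icc (0:ℝ) 1) :
    f x ≤ ⨆ y ∈ Set.Icc (0:ℝ) 1, f y := by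
  have hbdd : BddAbove (Set.range fun y => ⨆ _ : y ∈ Set.Icc (0:ℝ) 1, f y) := by
    refine ⟨max M 0, ?_⟩
    rintro _ ⟨y, rfl⟩
    by_cases h : y ∈ Set.Icc (0:ℝ) 1
    · show (⨆ _ : y ∈ Set.Icc (0:ℝ) 1, f y) ≤ max M 0
      rw [ciSup_pos (f := fun _ => f y) h]
      exact le_max_of_le_left (hM y h)
    · haveI : IsEmpty (y ∈ Set.Icc (0:ℝ) 1) := ⟨h⟩
      show (⨆ _ : y ∈ Set.Icc (0:ℝ) 1, f y) ≤ max M 0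
      rw [Real.iSup_of_isEmpty]
      exact le_max_right _ _
  calc f x = ⨆ _ : x ∈ Set.Icc (0:ℝ) 1, f x := (ciSup_pos (f := fun _ => f x) hx).symm
    _ ≤ ⨆ y ∈ Set.Icc (0:ℝ) 1, f y := le_ciSup hbdd x

/-- Oscillation bound on the logarithm of a positive periodic eigenfunction of
`Δ + ξ` in terms of the eigenvalue and a primitive `Ξ` of `ξ`. -/
theorem stmt6 :
    ∃ C > 0, ∀ (ξ ψ Ξ : ℝ → ℝ) (ζ : ℝ),
      Continuous ξ → Function.Periodic ξ 1 →
      Function.Periodic ψ 1 → ContDiff ℝ 2 ψ → (∀ x, 0 < ψ x) →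
      (∀ x, deriv (deriv ψ) x + ξ x * ψ x = ζ * ψ x) →
      (∀ x, HasDerivAt Ξ (ξ x) x) →
      ((⨆ x, Real.log (ψ x)) - (⨅ x, Real.log (ψ x))
          ≤ ⨆ x, |deriv (fun y => Real.log (ψ y)) x|) ∧
      (⨆ x, |deriv (fun y => Real.log (ψ y)) x|)
          ≤ C * (|ζ| + (⨆ x ∈ Set.Icc (0:ℝ) 1, |Ξ x|) + 1) := by
  refine ⟨4, by norm_num, ?_⟩
  intro ξ ψ Ξ ζ hξc hξp hψp hψ2 hψ0 heig hΞ
  set v : ℝ → ℝ := fun x => Real.log (ψ x) with hv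
  set g : ℝ → ℝ := fun x => deriv ψ x / ψ x with hg
  set B : ℝ := ⨆ x ∈ Set.Icc (0:ℝ) 1, |Ξ x| with hBdef
  -- differentiability of ψ
  have hψdiff : Differentiable ℝ ψ := hψ2.differentiable (by norm_num)
  have hψ' : ∀ x, HasDerivAt ψ (deriv ψ x) x := fun x => (hψdiff x).hasDerivAt
  have h2 : Differentiable ℝ (deriv ψ) := by
    have h := (contDiff_succ_iff_deriv.mp
      (show ContDiff ℝ (1 + 1) ψ from (by norm_num : ((2:ℕ):WithTop ℕ∞) = 1 + 1) ▸ hψ2)).2.2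
    exact h.differentiable (by norm_num)
  have hψ'' : ∀ x, HasDerivAt (deriv ψ) (deriv (deriv ψ) x) x := fun x => (h2 x).hasDerivAt
  -- derivative of log ψ
  have hlog : ∀ x, HasDerivAt v (g x) x := fun x => (hψ' x).log (hψ0 x).ne'
  have hdlog : ∀ x, deriv v x = g x := fun x => (hlog x).deriv
  have hvdiff : Differentiable ℝ v := fun x => (hlog x).differentiableAt
  -- derivative of g
  have hgd : ∀ x, HasDerivAt g (ζ - ξ x - g x ^ 2) x := by
    intro x
    have h := (hψ'' x).div (hψ' x) (hψ0 x).ne'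
    refine h.congr_deriv ?_
    have he : deriv (deriv ψ) x = ζ * ψ x - ξ x * ψ x := by linarith [heig x]
    rw [he, hg]
    have := (hψ0 x).ne'
    field_simp
  -- periodicity
  have hψ'per : Function.Periodic (deriv ψ) 1 := by
    intro x
    have hfe : (fun y => ψ (y + 1)) = ψ := funext fun y => hψp y
    calc deriv ψ (x + 1) = deriv (fun y => ψ (y + 1)) x := (deriv_comp_add_const ψ 1 x).symm
      _ = deriv ψ x := by rw [hfe]
  have hgper : Function.Periodic g 1 := fun x => by simp only [hg, hψ'per x, hψp x]
  have hvper : Function.Periodic v 1 := fun x => by simp only [hv, hψp x]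
  -- a zero of g
  have hv01 : v 0 = v 1 := by
    have := hvper 0
    simp only [zero_add] at this
    exact this.symm
  obtain ⟨x₀, hx₀I, hx₀d⟩ := exists_deriv_eq_zero (by norm_num : (0:ℝ) < 1)
    hvdiff.continuous.continuousOn hv01
  have hgx₀ : g x₀ = 0 := by rw [← hdlog x₀]; exact hx₀d
  -- the antitone function w
  set w : ℝ → ℝ := fun x => g x + Ξ x - ζ * x with hw
  have hwd : ∀ x, HasDerivAt w (-(g x ^ 2)) x := by
    intro x
    have h := ((hgd x).add (hΞ x)).sub ((hasDerivAt_id x).const_mul ζ)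
    refine h.congr_deriv ?_
    ring
  have hwanti : Antitone w :=
    antitone_of_deriv_nonpos (fun x => (hwd x).differentiableAt)
      (fun x => by rw [(hwd x).deriv]; exact neg_nonpos.mpr (sq_nonneg _))
  -- bound on Ξ over [0,1]
  have hΞdiff : Differentiable ℝ Ξ := fun x => (hΞ x).differentiableAt
  have hΞcont : Continuous Ξ := hΞdiff.continuous
  obtain ⟨m, hmI, hmax⟩ := isCompact_Icc.exists_isMaxOn
    (⟨0, by norm_num⟩ : (Set.Icc (0:ℝ) 1).Nonempty) hΞcont.abs.continuousOn
  have hBle : ∀ x ∈ Set.Icc (0:ℝ) 1, |Ξ x| ≤ B :=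
    fun x hx => le_biSup_Icc _ (fun y hy => hmax hy) hx
  have hB0 : (0:ℝ) ≤ B := le_trans (abs_nonneg _) (hBle 0 (by norm_num))
  -- pointwise bound for g on [0,1]
  have habs : ∀ x ∈ Set.Icc (0:ℝ) 1, |g x| ≤ 4 * B + 3 * |ζ| := by
    intro x hx
    have hx₀m : x₀ ∈ Set.Icc (0:ℝ) 1 := ⟨hx₀I.1.le, hx₀I.2.le⟩
    have hΞ0 := abs_le.mp (hBle 0 (by norm_num))
    have hΞ1 := abs_le.mp (hBle 1 (by norm_num))
    have hΞx₀ := abs_le.mp (hBle x₀ hx₀m)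
    have hΞx := abs_le.mp (hBle x hx)
    have hζx₀ : |ζ * x₀| ≤ |ζ| := by
      rw [abs_mul, abs_of_nonneg hx₀I.1.le]
      nlinarith [abs_nonneg ζ, hx₀I.2.le]
    have hζx₀' := abs_le.mp hζx₀
    have hζx : |ζ * x| ≤ |ζ| := by
      rw [abs_mul, abs_of_nonneg hx.1]
      nlinarith [abs_nonneg ζ, hx.2]
    have hζx' := abs_le.mp hζx
    have hζ := le_abs_self ζ
    have hζ' := neg_abs_le ζ
    have hg01 : g 1 = g 0 := by simpa using hgper 0
    have h1 : w 1 ≤ w x := hwanti hx.2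
    have h2' : w x ≤ w 0 := hwanti hx.1
    have h3 : w 1 ≤ w x₀ := hwanti hx₀I.2.le
    have h4 : w x₀ ≤ w 0 := hwanti hx₀I.1.le
    have hw0 : w 0 = g 0 + Ξ 0 := by simp [hw]
    have hw1 : w 1 = g 0 + Ξ 1 - ζ := by simp [hw, hg01]
    have hwx₀ : w x₀ = Ξ x₀ - ζ * x₀ := by simp [hw, hgx₀]
    have hwx : w x = g x + Ξ x - ζ * x := rfl
    rw [abs_le]
    constructor <;>
      linarith [h1, h2', h3, h4, hΞ0.1, hΞ0.2, hΞ1.1, hΞ1.2, hΞx₀.1, hΞx₀.2, hΞx.1, hΞx.2,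
        hζx₀'.1, hζx₀'.2, hζx'.1, hζx'.2]
  -- global bound via periodicity
  have hfrmem : ∀ x : ℝ, Int.fract x ∈ Set.Icc (0:ℝ) 1 :=
    fun x => ⟨Int.fract_nonneg x, (Int.fract_lt_one x).le⟩
  have hgbound : ∀ x, |g x| ≤ 4 * B + 3 * |ζ| := by
    intro x
    have hfr : g (Int.fract x) = g x := by
      rw [Int.fract]
      simpa using hgper.sub_int_mul_eq (x := x) ⌊x⌋
    rw [← hfr]
    exact habs _ (hfrmem x)
  have hK : ∀ x, |deriv v x| ≤ 4 * (|ζ| + B + 1) := by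
    intro x
    rw [hdlog x]
    have := hgbound x
    have := abs_nonneg ζ
    linarith
  have hSbdd : BddAbove (Set.range fun x => |deriv v x|) := by
    refine ⟨4 * (|ζ| + B + 1), ?_⟩
    rintro _ ⟨x, rfl⟩
    exact hK x
  have hSle : (⨆ x, |deriv v x|) ≤ 4 * (|ζ| + B + 1) := ciSup_le hK
  refine ⟨?_, hSle⟩
  -- oscillation bound
  have hSge : ∀ x, |g x| ≤ ⨆ x, |deriv v x| := fun x => (hdlog x) ▸ le_ciSup hSbdd x
  obtain ⟨a, haI, hamax⟩ := isCompact_Icc.exists_isMaxOn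
    (⟨0, by norm_num⟩ : (Set.Icc (0:ℝ) 1).Nonempty) hvdiff.continuous.continuousOn
  obtain ⟨b, hbI, hbmin⟩ := isCompact_Icc.exists_isMinOn
    (⟨0, by norm_num⟩ : (Set.Icc (0:ℝ) 1).Nonempty) hvdiff.continuous.continuousOn
  have hvred : ∀ x : ℝ, v (Int.fract x) = v x := by
    intro x
    rw [Int.fract]
    simpa using hvper.sub_int_mul_eq (x := x) ⌊x⌋
  have hsup : (⨆ x, v x) ≤ v a := ciSup_le fun x => (hvred x) ▸ hamax (hfrmem x)
  have hinf : v b ≤ ⨅ x, v x := le_ciInf fun x => (hvred x) ▸ hbmin (hfrmem x)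
  have hmvt : |v a - v b| ≤ (⨆ x, |deriv v x|) * |a - b| := by
    have h := Convex.norm_image_sub_le_of_norm_hasDerivWithin_le (f := v) (f' := g)
      (s := Set.univ) (fun x _ => (hlog x).hasDerivWithinAt) (fun x _ => hSge x)
      convex_univ (Set.mem_univ b) (Set.mem_univ a)
    simpa [Real.norm_eq_abs] using h
  have hab1 : |a - b| ≤ 1 := by
    rw [abs_le]
    exact ⟨by linarith [haI.1, hbI.2], by linarith [haI.2, hbI.1]⟩
  have hS0 : (0:ℝ) ≤ ⨆ x, |deriv v x| := le_trans (abs_nonneg _) (le_ciSup hSbdd 0)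
  have hfin : v a - v b ≤ ⨆ x, |deriv v x| := by
    calc v a - v b ≤ |v a - v b| := le_abs_self _
      _ ≤ (⨆ x, |deriv v x|) * |a - b| := hmvt
      _ ≤ (⨆ x, |deriv v x|) * 1 := by nlinarith [abs_nonneg (a - b)]
      _ = ⨆ x, |deriv v x| := mul_one _
  linarith
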